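/- Let D be a database instance in which all tuples are endogenous and Q a monotone Boolean query with ¬Q(∅). Then D is consistent w.r.t. the denial constraint κ(Q) (i.e., D ⊭ Q) if and only if CS(D, ∅, Q) = ∅, i.e., there is no actual cause for Q in D. (Proposition 4(a).) -/
import Mathlib


/-- `t` is an actual cause for query `Q` in instance `D` with endogenous part `Dn`. -/
def IsCause {U : Type*} [DecidableEq U] (D Dn : Finset U) (Q : Finset U → Prop) (t : U) : Prop :=
  t ∈ Dn ∧ ∃ Γ ⊆ Dn, t ∉ Γ ∧ Q (D \ Γ) ∧ ¬ Q (D \ insert t Γ)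

/-- Proposition 4(a): with all tuples endogenous, `D` is consistent w.r.t. `κ(Q)`
(i.e. `D ⊭ Q`) iff there is no actual cause for `Q` in `D`. -/
theorem consistent_iff_no_causes
    {U : Type*} [DecidableEq U] (D : Finset U) (Q : Finset U → Prop)
    (hmono : ∀ S S' : Finset U, S ⊆ S' → Q S → Q S')
    (hempty : ¬ Q ∅) :
    ¬ Q D ↔ ∀ t, ¬ IsCause D D Q t := by
  classical
  constructor
  · rintro hD t ⟨htD, Γ, hΓD, htΓ, hQ, -⟩
    exact hD (hmono _ _ (Finset.sdiff_subset) hQ)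
  · intro hnc hQD
    -- find a minimal S ⊆ D with Q S, by strong induction
    have key : ∀ S : Finset U, S ⊆ D → Q S → ∃ t, IsCause D D Q t := by
      intro S
      induction S using Finset.strongInductionOn with
      | _ S ih =>
        intro hSD hQS
        rcases S.eq_empty_or_nonempty with rfl | ⟨t, htS⟩
        · exact absurd hQS hempty
        by_cases h : Q (S.erase t)
        · exact ih (S.erase t) (Finset.erase_ssubset htS)
            ((Finset.erase_subset _ _).trans hSD) h
        · refine ⟨t, hSD htS, D \ S, Finset.sdiff_subset, ?_, ?_, ?_⟩
          · simp [htS]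
          · rwa [Finset.sdiff_sdiff_self_left, Finset.inter_eq_right.mpr hSD]
          · intro hQ'
            apply h
            apply hmono _ _ _ hQ'
            intro x hx
            simp only [Finset.mem_sdiff, Finset.mem_insert] at hx
            rcases hx with ⟨hxD, hx⟩
            push_neg at hx
            simp only [Finset.mem_erase]
            exact ⟨hx.1, hx.2 hxD⟩
    obtain ⟨t, ht⟩ := key D (le_refl _) hQD
    exact hnc t ht
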